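/- Let β* be s*-sparse with support S*, and let v ∈ ℝ^p. If β̂ = T_s(v) with s ≥ s*, then ‖β̂ − β*‖₂ ≤ 2‖(v − β*)_{S* ∪ supp(β̂)}‖₂, where the subscript denotes restriction of coordinates to the set S* ∪ supp(β̂). -/

import Mathlib

open Finset

/-- Key thresholding lemma: if `β̂ = T_s(v)` with `s ≥ s* = ‖β*‖₀`, then
`‖β̂ - β*‖₂ ≤ 2 ‖(v - β*)_{S* ∪ supp(β̂)}‖₂`. -/
theorem hard_thresholding_error_bound {p s : ℕ} (hs1 : 1 ≤ s)
    (v βstar : Fin p → ℝ) (A : Finset (Fin p)) (hA : A.card = s)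
    (hlargest : ∀ i ∈ A, ∀ j ∉ A, |v j| ≤ |v i|)
    (hsparse : (univ.filter (fun i => βstar i ≠ 0)).card ≤ s) :
    Real.sqrt (∑ i, ((if i ∈ A then v i else 0) - βstar i) ^ 2) ≤
      2 * Real.sqrt (∑ i ∈ (univ.filter (fun i => βstar i ≠ 0)) ∪
        (univ.filter (fun i => (if i ∈ A then v i else 0) ≠ 0)), (v i - βstar i) ^ 2) := by
  classical
  set S : Finset (Fin p) := univ.filter (fun i => βstar i ≠ 0) with hSdef
  set Sh : Finset (Fin p) := univ.filter (fun i => (if i ∈ A then v i else 0) ≠ 0) with hShdef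
  set U : Finset (Fin p) := S ∪ Sh with hUdef
  -- membership facts
  have hmemS : ∀ i, i ∈ S ↔ βstar i ≠ 0 := by intro i; simp [hSdef]
  have hmemSh : ∀ i, i ∈ Sh ↔ (if i ∈ A then v i else 0) ≠ 0 := by intro i; simp [hShdef]
  -- Step A : LHS sum over univ equals sum over U
  have hstepA : (∑ i, ((if i ∈ A then v i else 0) - βstar i) ^ 2)
      = ∑ i ∈ U, ((if i ∈ A then v i else 0) - βstar i) ^ 2 := by
    refine (Finset.sum_subset (Finset.subset_univ U) ?_).symm
    intro i _ hiU
    have h1 : βstar i = 0 := by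
      by_contra h
      exact hiU (Finset.mem_union_left _ ((hmemS i).2 h))
    have h2 : (if i ∈ A then v i else 0) = 0 := by
      by_contra h
      exact hiU (Finset.mem_union_right _ ((hmemSh i).2 h))
    rw [h1, h2]; ring
  rw [hstepA]
  -- Euclidean vectors
  set a : EuclideanSpace ℝ (Fin p) :=
    WithLp.toLp 2 (fun i => if i ∈ U then (if i ∈ A then v i else 0) - v i else 0) with hadef
  set b : EuclideanSpace ℝ (Fin p) :=
    WithLp.toLp 2 (fun i => if i ∈ U then v i - βstar i else 0) with hbdef
  have hsum_ite : ∀ t : Fin p → ℝ,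
      (∑ i, (if i ∈ U then t i else 0) ^ 2) = ∑ i ∈ U, (t i) ^ 2 := by
    intro t
    simp_rw [apply_ite (· ^ 2), zero_pow (two_ne_zero)]
    rw [Finset.sum_ite_mem, Finset.univ_inter]
  have hnorm : ∀ x : EuclideanSpace ℝ (Fin p),
      ‖x‖ = Real.sqrt (∑ i, (x i) ^ 2) := by
    intro x
    rw [EuclideanSpace.norm_eq]
    congr 1
    exact Finset.sum_congr rfl fun i _ => by rw [Real.norm_eq_abs, sq_abs]
  have ha : ‖a‖ = Real.sqrt (∑ i ∈ U, ((if i ∈ A then v i else 0) - v i) ^ 2) := by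
    rw [hnorm]; congr 1; exact hsum_ite _
  have hb : ‖b‖ = Real.sqrt (∑ i ∈ U, (v i - βstar i) ^ 2) := by
    rw [hnorm]; congr 1; exact hsum_ite _
  have hab : ⇑(a + b) = fun i => if i ∈ U then (if i ∈ A then v i else 0) - βstar i else 0 := by
    funext i
    have : (a + b) i = a i + b i := rfl
    rw [this, hadef, hbdef]
    by_cases hi : i ∈ U <;> simp [hi] <;> ring
  have habnorm : ‖a + b‖
      = Real.sqrt (∑ i ∈ U, ((if i ∈ A then v i else 0) - βstar i) ^ 2) := by
    rw [hnorm]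
    congr 1
    rw [hab]
    exact hsum_ite _
  -- Key inequality : ‖a‖ ≤ ‖b‖
  -- e1 : sum over U of (β̂ - v)² equals sum over U \ A of v²
  have e1 : (∑ i ∈ U, ((if i ∈ A then v i else 0) - v i) ^ 2)
      = ∑ i ∈ U \ A, (v i) ^ 2 := by
    rw [← Finset.sum_subset (Finset.sdiff_subset (s := U) (t := A))]
    · refine Finset.sum_congr rfl fun i hi => ?_
      have hiA : i ∉ A := (Finset.mem_sdiff.1 hi).2
      simp [hiA]
    · intro i hiU hi
      have hiA : i ∈ A := by
        by_contra h
        exact hi (Finset.mem_sdiff.2 ⟨hiU, h⟩)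
      simp [hiA]
  -- e3 : U \ A ⊆ S \ A
  have e2 : U \ A ⊆ S \ A := by
    intro i hi
    obtain ⟨hiU, hiA⟩ := Finset.mem_sdiff.1 hi
    refine Finset.mem_sdiff.2 ⟨?_, hiA⟩
    rcases Finset.mem_union.1 hiU with h | h
    · exact h
    · exact absurd ((hmemSh i).1 h) (by simp [hiA])
  have e3 : (∑ i ∈ U \ A, (v i) ^ 2) ≤ ∑ i ∈ S \ A, (v i) ^ 2 :=
    Finset.sum_le_sum_of_subset_of_nonneg e2 (fun i _ _ => sq_nonneg _)
  -- card comparison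
  have hcard : (S \ A).card ≤ (A \ S).card := by
    have h1 := Finset.card_sdiff_add_card_inter S A
    have h2 := Finset.card_sdiff_add_card_inter A S
    have h3 : (S ∩ A).card = (A ∩ S).card := by rw [Finset.inter_comm]
    have h4 : S.card ≤ A.card := by rw [hA]; exact hsparse
    omega
  -- e4 : thresholding comparison
  have e4 : (∑ i ∈ S \ A, (v i) ^ 2) ≤ ∑ i ∈ A \ S, (v i) ^ 2 := by
    by_cases hne : (A \ S).Nonempty
    · obtain ⟨i₀, hi₀, hmin⟩ := Finset.exists_min_image (A \ S) (fun i => (v i) ^ 2) hne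
      have hi₀A : i₀ ∈ A := (Finset.mem_sdiff.1 hi₀).1
      calc (∑ i ∈ S \ A, (v i) ^ 2)
          ≤ (S \ A).card • ((v i₀) ^ 2) := by
            refine Finset.sum_le_card_nsmul _ _ _ fun j hj => ?_
            have hjA : j ∉ A := (Finset.mem_sdiff.1 hj).2
            have := hlargest i₀ hi₀A j hjA
            calc (v j) ^ 2 = |v j| ^ 2 := (sq_abs _).symm
              _ ≤ |v i₀| ^ 2 := by
                  exact pow_le_pow_left₀ (abs_nonneg _) this 2
              _ = (v i₀) ^ 2 := sq_abs _
        _ ≤ (A \ S).card • ((v i₀) ^ 2) := by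
            rw [nsmul_eq_mul, nsmul_eq_mul]
            exact mul_le_mul_of_nonneg_right (Nat.cast_le.2 hcard) (sq_nonneg _)
        _ ≤ ∑ i ∈ A \ S, (v i) ^ 2 :=
            Finset.card_nsmul_le_sum _ _ _ fun j hj => hmin j hj
    · have h0 : A \ S = ∅ := Finset.not_nonempty_iff_eq_empty.1 hne
      have h1 : S \ A = ∅ := by
        rw [← Finset.card_eq_zero]
        have := hcard
        rw [h0] at this
        simpa using this
      rw [h0, h1]
  -- e5 : final comparison
  have e5 : (∑ i ∈ A \ S, (v i) ^ 2) ≤ ∑ i ∈ U, (v i - βstar i) ^ 2 := by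
    have h1 : (∑ i ∈ A \ S, (v i) ^ 2)
        = ∑ i ∈ (A \ S).filter (fun i => v i ≠ 0), (v i) ^ 2 := by
      refine (Finset.sum_subset (Finset.filter_subset _ _) ?_).symm
      intro i hi hif
      have : v i = 0 := by
        by_contra h
        exact hif (Finset.mem_filter.2 ⟨hi, h⟩)
      simp [this]
    rw [h1]
    have hsub : (A \ S).filter (fun i => v i ≠ 0) ⊆ U := by
      intro i hi
      obtain ⟨hiAS, hvi⟩ := Finset.mem_filter.1 hi
      have hiA : i ∈ A := (Finset.mem_sdiff.1 hiAS).1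
      exact Finset.mem_union_right _ ((hmemSh i).2 (by simpa [hiA] using hvi))
    calc (∑ i ∈ (A \ S).filter (fun i => v i ≠ 0), (v i) ^ 2)
        = ∑ i ∈ (A \ S).filter (fun i => v i ≠ 0), (v i - βstar i) ^ 2 := by
          refine Finset.sum_congr rfl fun i hi => ?_
          have hiS : i ∉ S := (Finset.mem_sdiff.1 (Finset.mem_filter.1 hi).1).2
          have : βstar i = 0 := by
            by_contra h
            exact hiS ((hmemS i).2 h)
          rw [this, sub_zero]
      _ ≤ ∑ i ∈ U, (v i - βstar i) ^ 2 :=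
          Finset.sum_le_sum_of_subset_of_nonneg hsub (fun i _ _ => sq_nonneg _)
  have hale : ‖a‖ ≤ ‖b‖ := by
    rw [ha, hb]
    exact Real.sqrt_le_sqrt (by rw [e1]; exact le_trans e3 (le_trans e4 e5))
  calc Real.sqrt (∑ i ∈ U, ((if i ∈ A then v i else 0) - βstar i) ^ 2)
      = ‖a + b‖ := habnorm.symm
    _ ≤ ‖a‖ + ‖b‖ := norm_add_le _ _
    _ ≤ ‖b‖ + ‖b‖ := add_le_add_left hale _
    _ = 2 * Real.sqrt (∑ i ∈ U, (v i - βstar i) ^ 2) := by rw [hb]; ring
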